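/- For every natural number m ≥ 1, ∫_0^1 (1/x) ∫_0^x (1/y) ∫_0^y (1/z) [x^m - (x-z)^m] dz dy dx = (1/m) ∑_{k=1}^{m} H_k/k, where H_k is the k-th harmonic number. -/

import Mathlib

open Finset MeasureTheory intervalIntegral

/-- The k-th harmonic number. -/
noncomputable def H (k : ℕ) : ℝ := ∑ j ∈ Finset.Icc 1 k, (1 : ℝ) / j

-- key cast identity
lemma cast_choose_succ (n j : ℕ) :
    ((n:ℝ)+1) * (n.choose j) = ((j:ℝ)+1) * ((n+1).choose (j+1)) := by
  have := Nat.add_one_mul_choose_eq n j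
  have := congrArg (fun t : ℕ => (t : ℝ)) this
  push_cast at this
  linarith

-- alternating sum of C(n+1, j+1) over j in range (n+1) equals 1
lemma alt_choose_sum (n : ℕ) :
    ∑ j ∈ range (n+1), (-1:ℝ)^j * ((n+1).choose (j+1)) = 1 := by
  have h := Int.alternating_sum_range_choose (n := n+1)
  rw [if_neg (Nat.succ_ne_zero n)] at h
  have h' : ((∑ i ∈ range (n+2), (-1:ℤ)^i * ((n+1).choose i) : ℤ) : ℝ) = 0 := by
    rw [h]; norm_num
  push_cast at h'
  rw [Finset.sum_range_succ'] at h'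
  -- h' : ∑ i ∈ range (n+1), (-1)^(i+1) * C(n+1, i+1) + (-1)^0 * C(n+1,0) = 1
  have : ∑ j ∈ range (n+1), (-1:ℝ)^j * ((n+1).choose (j+1))
      = - ∑ i ∈ range (n+1), (-1:ℝ)^(i+1) * ((n+1).choose (i+1)) := by
    rw [← Finset.sum_neg_distrib]
    refine Finset.sum_congr rfl fun j _ => ?_
    rw [pow_succ]; ring
  rw [this]
  simp only [Nat.choose_zero_right, Nat.cast_one] at h'
  linarith [h']

lemma alt_harmonic (n : ℕ) :
    ∑ j ∈ range n, (-1:ℝ)^j * (n.choose (j+1)) / (j+1) = H n := by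
  induction n with
  | zero => simp [H]
  | succ n ih =>
    have hH : H (n+1) = H n + 1/((n:ℝ)+1) := by
      unfold H
      rw [Finset.sum_Icc_succ_top (by omega : 1 ≤ n+1)]
      push_cast; ring
    rw [hH, ← ih]
    have pascal : ∀ j, ((n+1).choose (j+1) : ℝ) = (n.choose j : ℝ) + (n.choose (j+1) : ℝ) := by
      intro j; rw [Nat.choose_succ_succ]; push_cast; ring
    have split : ∑ j ∈ range (n+1), (-1:ℝ)^j * ((n+1).choose (j+1)) / (j+1)
        = (∑ j ∈ range (n+1), (-1:ℝ)^j * (n.choose j) / (j+1))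
          + ∑ j ∈ range (n+1), (-1:ℝ)^j * (n.choose (j+1)) / (j+1) := by
      rw [← Finset.sum_add_distrib]
      refine Finset.sum_congr rfl fun j _ => ?_
      rw [pascal]; ring
    rw [split]
    have h2 : ∑ j ∈ range (n+1), (-1:ℝ)^j * (n.choose (j+1)) / (j+1)
        = ∑ j ∈ range n, (-1:ℝ)^j * (n.choose (j+1)) / (j+1) := by
      rw [Finset.sum_range_succ, Nat.choose_eq_zero_of_lt (by omega)]
      simp
    have h1 : ∑ j ∈ range (n+1), (-1:ℝ)^j * (n.choose j) / (j+1) = 1/((n:ℝ)+1) := by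
      have : ∀ j ∈ range (n+1), (-1:ℝ)^j * (n.choose j) / (j+1)
          = (1/((n:ℝ)+1)) * ((-1:ℝ)^j * ((n+1).choose (j+1))) := by
        intro j _
        have hc := cast_choose_succ n j
        have hj : ((j:ℝ)+1) ≠ 0 := by positivity
        have hn : ((n:ℝ)+1) ≠ 0 := by positivity
        rw [one_div, inv_mul_eq_div, div_eq_div_iff hj hn]
        linear_combination ((-1:ℝ)^j) * hc
      rw [Finset.sum_congr rfl this, ← Finset.mul_sum, alt_choose_sum]
      ring
    rw [h1, h2]; ring

lemma alt_sq (n : ℕ) :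
    ∑ j ∈ range n, (-1:ℝ)^j * (n.choose (j+1)) / ((j:ℝ)+1)^2 = ∑ k ∈ Finset.Icc 1 n, H k / k := by
  induction n with
  | zero => simp
  | succ n ih =>
    rw [Finset.sum_Icc_succ_top (by omega : 1 ≤ n+1), ← ih]
    have pascal : ∀ j, ((n+1).choose (j+1) : ℝ) = (n.choose j : ℝ) + (n.choose (j+1) : ℝ) := by
      intro j; rw [Nat.choose_succ_succ]; push_cast; ring
    have split : ∑ j ∈ range (n+1), (-1:ℝ)^j * ((n+1).choose (j+1)) / ((j:ℝ)+1)^2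
        = (∑ j ∈ range (n+1), (-1:ℝ)^j * (n.choose j) / ((j:ℝ)+1)^2)
          + ∑ j ∈ range (n+1), (-1:ℝ)^j * (n.choose (j+1)) / ((j:ℝ)+1)^2 := by
      rw [← Finset.sum_add_distrib]
      refine Finset.sum_congr rfl fun j _ => ?_
      rw [pascal]; ring
    rw [split]
    have h2 : ∑ j ∈ range (n+1), (-1:ℝ)^j * (n.choose (j+1)) / ((j:ℝ)+1)^2
        = ∑ j ∈ range n, (-1:ℝ)^j * (n.choose (j+1)) / ((j:ℝ)+1)^2 := by
      rw [Finset.sum_range_succ, Nat.choose_eq_zero_of_lt (by omega)]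
      simp
    have h1 : ∑ j ∈ range (n+1), (-1:ℝ)^j * (n.choose j) / ((j:ℝ)+1)^2
        = H (n+1) / ((n:ℝ)+1) := by
      have key : ∀ j ∈ range (n+1), (-1:ℝ)^j * (n.choose j) / ((j:ℝ)+1)^2
          = (1/((n:ℝ)+1)) * ((-1:ℝ)^j * ((n+1).choose (j+1)) / ((j:ℝ)+1)) := by
        intro j _
        have hc := cast_choose_succ n j
        have hj : ((j:ℝ)+1) ≠ 0 := by positivity
        have hn : ((n:ℝ)+1) ≠ 0 := by positivity
        rw [one_div, inv_mul_eq_div, div_div, div_eq_div_iff (pow_ne_zero 2 hj) (mul_ne_zero hj hn)]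
        linear_combination ((-1:ℝ)^j * ((j:ℝ)+1)) * hc
      rw [Finset.sum_congr rfl key, ← Finset.mul_sum]
      have := alt_harmonic (n+1)
      push_cast at this ⊢
      rw [this]; ring
    rw [h1, h2]
    have : H (n+1) / ((n:ℝ)+1) = H (n+1) / ((n:ℕ)+1 : ℝ) := by norm_num
    push_cast
    ring

-- congruence of interval integrals for functions agreeing off 0
lemma int_congr_ne (a b : ℝ) (f g : ℝ → ℝ) (h : ∀ t : ℝ, t ≠ 0 → f t = g t) :
    ∫ t in a..b, f t = ∫ t in a..b, g t := by
  apply intervalIntegral.integral_congr_ae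
  have h0 : ∀ᵐ t : ℝ, t ≠ (0:ℝ) := by
    rw [MeasureTheory.ae_iff]
    simp
  filter_upwards [h0] with t ht _
  exact h t ht

-- binomial expansion
lemma expand_pow (m : ℕ) (x z : ℝ) :
    x ^ m - (x - z) ^ m
      = ∑ j ∈ range m, (-1:ℝ)^j * (m.choose (j+1)) * x^(m-(j+1)) * z^(j+1) := by
  have h := add_pow x (-z) m
  rw [Finset.sum_range_succ] at h
  have hxz : x - z = x + (-z) := by ring
  rw [hxz, h]
  simp only [Nat.sub_self, pow_zero, Nat.choose_self, Nat.cast_one, mul_one, one_mul]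
  rw [← Finset.sum_range_reflect (fun k => x ^ k * (-z) ^ (m - k) * ((m.choose k : ℕ) : ℝ)) m]
  have : ∀ j ∈ range m,
      x ^ (m-1-j) * (-z) ^ (m - (m-1-j)) * ((m.choose (m-1-j) : ℕ) : ℝ)
      = -((-1:ℝ)^j * (m.choose (j+1)) * x^(m-(j+1)) * z^(j+1)) := by
    intro j hj
    rw [Finset.mem_range] at hj
    have e1 : m - (m-1-j) = j+1 := by omega
    have e2 : m - 1 - j = m - (j+1) := by omega
    have e3 : m.choose (m - (j+1)) = m.choose (j+1) := Nat.choose_symm (by omega)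
    rw [e1, e2, e3]
    rw [neg_pow]
    ring
  rw [Finset.sum_congr rfl this, Finset.sum_neg_distrib]
  ring

lemma inner_int (m : ℕ) (x y : ℝ) :
    ∫ z in (0:ℝ)..y, (1/z) * (x^m - (x-z)^m)
      = ∑ j ∈ range m, (-1:ℝ)^j * (m.choose (j+1)) * x^(m-(j+1)) * y^(j+1) / ((j:ℝ)+1) := by
  have step1 : ∫ z in (0:ℝ)..y, (1/z) * (x^m - (x-z)^m)
      = ∫ z in (0:ℝ)..y, ∑ j ∈ range m, (-1:ℝ)^j * (m.choose (j+1)) * x^(m-(j+1)) * z^j := by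
    apply int_congr_ne
    intro z hz
    rw [expand_pow, Finset.mul_sum]
    refine Finset.sum_congr rfl fun j _ => ?_
    rw [pow_succ]
    field_simp
  rw [step1, intervalIntegral.integral_finset_sum]
  · refine Finset.sum_congr rfl fun j _ => ?_
    have : (fun z : ℝ => (-1:ℝ)^j * (m.choose (j+1)) * x^(m-(j+1)) * z^j)
        = fun z : ℝ => ((-1:ℝ)^j * (m.choose (j+1)) * x^(m-(j+1))) * z^j := by
      funext z; ring
    rw [this, intervalIntegral.integral_const_mul, integral_pow]
    rw [zero_pow (Nat.succ_ne_zero j)]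
    push_cast
    ring
  · intro j _
    have : (fun z : ℝ => (-1:ℝ)^j * (m.choose (j+1)) * x^(m-(j+1)) * z^j)
        = fun z : ℝ => ((-1:ℝ)^j * (m.choose (j+1)) * x^(m-(j+1))) * z^j := by
      funext z; ring
    rw [this]
    exact (intervalIntegrable_pow j).const_mul _

lemma mid_int (m : ℕ) (x : ℝ) :
    ∫ y in (0:ℝ)..x, (1/y) * ∑ j ∈ range m, (-1:ℝ)^j * (m.choose (j+1)) * x^(m-(j+1)) * y^(j+1) / ((j:ℝ)+1)
      = ∑ j ∈ range m, (-1:ℝ)^j * (m.choose (j+1)) * x^(m-(j+1)) * x^(j+1) / ((j:ℝ)+1)^2 := by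
  have step1 : ∫ y in (0:ℝ)..x, (1/y) * ∑ j ∈ range m, (-1:ℝ)^j * (m.choose (j+1)) * x^(m-(j+1)) * y^(j+1) / ((j:ℝ)+1)
      = ∫ y in (0:ℝ)..x, ∑ j ∈ range m, ((-1:ℝ)^j * (m.choose (j+1)) * x^(m-(j+1)) / ((j:ℝ)+1)) * y^j := by
    apply int_congr_ne
    intro y hy
    rw [Finset.mul_sum]
    refine Finset.sum_congr rfl fun j _ => ?_
    rw [pow_succ]
    have hj : ((j:ℝ)+1) ≠ 0 := by positivity
    field_simp
  rw [step1, intervalIntegral.integral_finset_sum]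
  · refine Finset.sum_congr rfl fun j _ => ?_
    rw [intervalIntegral.integral_const_mul, integral_pow, zero_pow (Nat.succ_ne_zero j)]
    have hj : ((j:ℝ)+1) ≠ 0 := by positivity
    rw [sub_zero]
    rw [div_mul_div_comm, ← pow_two]
  · intro j _
    exact (intervalIntegrable_pow j).const_mul _


theorem stmt_5 (m : ℕ) (hm : 1 ≤ m) :
    ∫ x in (0 : ℝ)..1, (1 / x) * ∫ y in (0 : ℝ)..x, (1 / y) *
      ∫ z in (0 : ℝ)..y, (1 / z) * (x ^ m - (x - z) ^ m) =
      (1 / m) * ∑ k ∈ Finset.Icc 1 m, H k / k := by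
  simp only [inner_int, mid_int]
  set S : ℝ := ∑ j ∈ range m, (-1:ℝ)^j * (m.choose (j+1)) / ((j:ℝ)+1)^2 with hS
  have step : ∫ x in (0:ℝ)..1, (1/x) * ∑ j ∈ range m, (-1:ℝ)^j * (m.choose (j+1)) * x^(m-(j+1)) * x^(j+1) / ((j:ℝ)+1)^2
      = ∫ x in (0:ℝ)..1, S * x^(m-1) := by
    apply int_congr_ne
    intro x hx
    rw [hS, Finset.sum_mul, Finset.mul_sum]
    refine Finset.sum_congr rfl fun j hj => ?_
    rw [Finset.mem_range] at hj
    have hx1 : x^(m-(j+1)) * x^(j+1) = x^(m-1) * x := by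
      rw [← pow_add, ← pow_succ]; congr 1; omega
    have hjj : ((j:ℝ)+1) ≠ 0 := by positivity
    rw [mul_assoc _ (x^(m-(j+1))), hx1]
    field_simp
  rw [step, intervalIntegral.integral_const_mul, integral_pow]
  have hmc : ((m-1:ℕ):ℝ) + 1 = (m:ℝ) := by
    have h : (m-1)+1 = m := by omega
    exact_mod_cast congrArg (fun t : ℕ => (t:ℝ)) h
  rw [hmc, one_pow, zero_pow (by omega : m - 1 + 1 ≠ 0), sub_zero]
  rw [hS, alt_sq m]
  ring
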